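/- For each integer m ≥ 1, the function p_m(x) = (1/π)·sin(πm/(m+1)) / (x^{m/(m+1)}·(x^{2/(m+1)} - 2x^{1/(m+1)} cos(πm/(m+1)) + 1)) for x > 0 is a probability density on (0,∞). -/

import Mathlib

open Real Set Filter

/-- For each integer `m ≥ 1`, the function
`p_m(x) = (1/π)·sin(πm/(m+1)) / (x^{m/(m+1)}(x^{2/(m+1)} - 2x^{1/(m+1)}cos(πm/(m+1)) + 1))`
is a probability density on `(0,∞)`: it is nonnegative there and integrates to `1`. -/
theorem productSpherical_density (m : ℕ) (hm : 1 ≤ m) :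
    (∀ x : ℝ, 0 < x →
      0 ≤ (1 / Real.pi) * Real.sin (Real.pi * m / (m + 1)) /
        (x ^ ((m : ℝ) / (m + 1)) *
          (x ^ ((2 : ℝ) / (m + 1)) - 2 * x ^ ((1 : ℝ) / (m + 1)) *
            Real.cos (Real.pi * m / (m + 1)) + 1))) ∧
    (∫ x in Set.Ioi (0 : ℝ),
      (1 / Real.pi) * Real.sin (Real.pi * m / (m + 1)) /
        (x ^ ((m : ℝ) / (m + 1)) *
          (x ^ ((2 : ℝ) / (m + 1)) - 2 * x ^ ((1 : ℝ) / (m + 1)) *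
            Real.cos (Real.pi * m / (m + 1)) + 1)) = 1) := by
  set θ : ℝ := Real.pi * m / (m + 1) with hθdef
  have hm1 : (1 : ℝ) ≤ m := by exact_mod_cast hm
  have hM : (0 : ℝ) < (m : ℝ) + 1 := by linarith
  have hθpos : 0 < θ := by
    apply div_pos (mul_pos Real.pi_pos (by linarith)) hM
  have hθlt : θ < Real.pi := by
    rw [hθdef, div_lt_iff₀ hM]
    nlinarith [Real.pi_pos]
  have hs : 0 < Real.sin θ := Real.sin_pos_of_pos_of_lt_pi hθpos hθlt
  set s : ℝ := Real.sin θ with hsdef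
  set p : ℝ := (1 : ℝ) / (m + 1) with hpdef
  have hp : 0 < p := by positivity
  -- quadratic denominator positivity
  have hQpos : ∀ w : ℝ, 0 < w ^ 2 - 2 * w * Real.cos θ + 1 := by
    intro w
    have h1 : w ^ 2 - 2 * w * Real.cos θ + 1 = (w - Real.cos θ) ^ 2 + s ^ 2 := by
      rw [hsdef]
      linear_combination -Real.sin_sq_add_cos_sq θ
    rw [h1]; positivity
  -- nonnegativity
  have hnonneg : ∀ x : ℝ, 0 < x →
      0 ≤ (1 / Real.pi) * s /
        (x ^ ((m : ℝ) / (m + 1)) *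
          (x ^ ((2 : ℝ) / (m + 1)) - 2 * x ^ ((1 : ℝ) / (m + 1)) * Real.cos θ + 1)) := by
    intro x hx
    have h2 : x ^ ((2 : ℝ) / (m + 1)) = (x ^ p) ^ 2 := by
      rw [← Real.rpow_natCast (x ^ p) 2, ← Real.rpow_mul hx.le, hpdef]
      congr 1; ring
    rw [h2]
    have := hQpos (x ^ p)
    have h3 : (0:ℝ) < x ^ ((m : ℝ) / (m + 1)) := Real.rpow_pos_of_pos hx _
    positivity
  refine ⟨hnonneg, ?_⟩
  -- antiderivative
  set G : ℝ → ℝ := fun x => (((m : ℝ) + 1) / Real.pi) * Real.arctan ((x ^ p - Real.cos θ) / s)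
    with hGdef
  have hcont : ContinuousWithinAt G (Ici 0) 0 := by
    have h1 : ContinuousWithinAt (fun x : ℝ => x ^ p) (Ici 0) 0 :=
      (Real.continuousAt_rpow_const 0 p (Or.inr hp.le)).continuousWithinAt
    exact continuousWithinAt_const.mul
      (Real.continuous_arctan.continuousAt.comp_continuousWithinAt
        ((h1.sub continuousWithinAt_const).div_const _))
  have hderiv : ∀ x ∈ Ioi (0:ℝ), HasDerivAt G
      ((1 / Real.pi) * s /
        (x ^ ((m : ℝ) / (m + 1)) *
          (x ^ ((2 : ℝ) / (m + 1)) - 2 * x ^ ((1 : ℝ) / (m + 1)) * Real.cos θ + 1))) x := by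
    intro x hx
    have hx : (0:ℝ) < x := hx
    have hinner : HasDerivAt (fun y : ℝ => (y ^ p - Real.cos θ) / s)
        ((p * x ^ (p - 1)) / s) x :=
      ((Real.hasDerivAt_rpow_const (Or.inl hx.ne')).sub_const _).div_const _
    have harctan := (Real.hasDerivAt_arctan ((x ^ p - Real.cos θ) / s)).comp x hinner
    have hG := harctan.const_mul (((m : ℝ) + 1) / Real.pi)
    refine hG.congr_deriv (Eq.symm ?_)
    set w : ℝ := x ^ p with hwdef
    have hw : 0 < w := Real.rpow_pos_of_pos hx _
    have h2 : x ^ ((2 : ℝ) / (m + 1)) = w ^ 2 := by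
      rw [hwdef, ← Real.rpow_natCast (x ^ p) 2, ← Real.rpow_mul hx.le, hpdef]
      congr 1; ring
    have hA : x ^ ((m : ℝ) / (m + 1)) * w = x := by
      rw [hwdef, hpdef, ← Real.rpow_add hx]
      rw [show (m : ℝ) / (m + 1) + 1 / (m + 1) = 1 by field_simp]
      exact Real.rpow_one x
    have hA' : x ^ ((m : ℝ) / (m + 1)) = x / w := by
      rw [eq_div_iff hw.ne']; exact hA
    have hxp1 : x ^ (p - 1) = w / x := by
      rw [hwdef, Real.rpow_sub hx, Real.rpow_one]
    have hQ := hQpos w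
    have hQ' : 1 + ((w - Real.cos θ) / s) ^ 2 =
        (w ^ 2 - 2 * w * Real.cos θ + 1) / s ^ 2 := by
      have hQeq : w ^ 2 - 2 * w * Real.cos θ + 1 = (w - Real.cos θ) ^ 2 + s ^ 2 := by
        rw [hsdef]; linear_combination -Real.sin_sq_add_cos_sq θ
      rw [hQeq, add_div, div_self (pow_ne_zero 2 hs.ne'), div_pow, add_comm]
    rw [h2, hA', hxp1, hQ']
    have hpval : p * ((m:ℝ)+1) = 1 := by rw [hpdef]; field_simp
    have hπ := Real.pi_ne_zero
    have hQne := hQ.ne'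
    rw [hpdef]
    field_simp
  have hpos : ∀ x ∈ Ioi (0:ℝ), 0 ≤ (1 / Real.pi) * s /
        (x ^ ((m : ℝ) / (m + 1)) *
          (x ^ ((2 : ℝ) / (m + 1)) - 2 * x ^ ((1 : ℝ) / (m + 1)) * Real.cos θ + 1)) :=
    fun x hx => hnonneg x hx
  have htop : Tendsto G atTop (nhds ((((m:ℝ)+1)/Real.pi) * (Real.pi / 2))) := by
    apply Tendsto.const_mul
    apply (tendsto_nhds_of_tendsto_nhdsWithin Real.tendsto_arctan_atTop).comp
    apply Tendsto.atTop_div_const hs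
    exact tendsto_atTop_add_const_right _ _ (tendsto_rpow_atTop hp)
  have key := MeasureTheory.integral_Ioi_of_hasDerivAt_of_nonneg hcont hderiv hpos htop
  rw [key]
  -- compute G 0
  have hG0 : G 0 = (((m:ℝ)+1)/Real.pi) * (θ - Real.pi / 2) := by
    have h0 : (0:ℝ) ^ p = 0 := Real.zero_rpow hp.ne'
    have htan : (0 - Real.cos θ) / s = Real.tan (θ - Real.pi / 2) := by
      rw [Real.tan_eq_sin_div_cos, Real.sin_sub_pi_div_two, Real.cos_sub_pi_div_two, hsdef]
      ring
    have harc : Real.arctan (Real.tan (θ - Real.pi / 2)) = θ - Real.pi / 2 :=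
      Real.arctan_tan (by linarith) (by linarith)
    simp only [hGdef, h0, htan, harc]
  rw [hG0]
  have hpi := Real.pi_ne_zero
  rw [hθdef]
  field_simp
  ring
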